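/- Let λ be a partition and let s = (a,b) be a square not in λ such that λ' = λ ∪ {(a,b)} is again (the Young diagram of) a partition. Work over R' = ℤ[x_{ij} : (i,j) ∈ λ'], and for a square (r,s) let P_{rs} and P'_{rs} denote the polynomials defined from λ and from λ', respectively (with the convention P_{rs} = 1 when λ(r,s) = ∅). Then for every square (i,j) with 1 ≤ i ≤ a and 1 ≤ j ≤ b one has P'_{ij} = x_{ab} · P_{ij} + P_{i,b+1} · P_{a+1,j}, and for every square (i,j) with i > a or j > b one has P'_{ij} = P_{ij}. -/

import Mathlib

open MvPolynomial

/-- Membership of the (0-indexed) square `(i,j)` in the extended diagram `λ*`,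
where `f k` is the `(k+1)`-st part of the partition `λ`. -/
def MemExt (f : ℕ → ℕ) (i j : ℕ) : Prop := (i = 0 ∨ 0 < f (i - 1)) ∧ j ≤ f i

/-- `A_{r+1,s+1}`: the product of the variables over all squares of `λ(r+1,s+1)`
(0-indexed corner `(r,s)`; the variable of the 1-based square `(u,v)` is `X (u-1, v-1)`). -/
noncomputable def Apoly (f : ℕ → ℕ) (r s : ℕ) : MvPolynomial (ℕ × ℕ) ℤ :=
  ∏ᶠ (u : ℕ) (v : ℕ) (_ : v < f (r + u) - s), X (r + u, s + v)

/-- `P_{r+1,s+1}`: the generating polynomial of the skew diagrams `λ(r+1,s+1) \ μ`,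
summed over all partitions `μ` contained in `λ(r+1,s+1)` (0-indexed corner `(r,s)`). -/
noncomputable def Ppoly (f : ℕ → ℕ) (r s : ℕ) : MvPolynomial (ℕ × ℕ) ℤ :=
  ∑ᶠ μ ∈ {μ : ℕ → ℕ | Antitone μ ∧ ∀ k, μ k ≤ f (r + k) - s},
    ∏ᶠ (u : ℕ) (v : ℕ) (_ : v < f (r + u) - s) (_ : μ u ≤ v), X (r + u, s + v)


variable {M : Type*} [CommMonoid M]

theorem finprod_Ico (c m : ℕ) (g : ℕ → M) :
    (∏ᶠ (v : ℕ) (_ : v < c) (_ : m ≤ v), g v) = ∏ v ∈ Finset.Ico m c, g v := by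
  classical
  calc (∏ᶠ (v : ℕ) (_ : v < c) (_ : m ≤ v), g v)
      = ∏ᶠ (v : ℕ), if v ∈ Finset.Ico m c then g v else 1 := by
        apply finprod_congr; intro v
        by_cases h : v < c <;> by_cases h' : m ≤ v <;>
          simp [finprod_eq_if, h, h', Finset.mem_Ico]
    _ = ∏ v ∈ Finset.Ico m c, (if v ∈ Finset.Ico m c then g v else 1) := by
        apply finprod_eq_prod_of_mulSupport_subset
        intro v hv
        simp only [Function.mem_mulSupport] at hv
        by_contra h
        simp only [Finset.coe_Ico, Set.mem_Ico] at h
        rw [if_neg (by simpa [Finset.mem_Ico] using h)] at hv; exact hv rfl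
    _ = ∏ v ∈ Finset.Ico m c, g v := by
        apply Finset.prod_congr rfl; intro v hv; simp [hv]

-- outer finprod to range
theorem finprod_range (Mn : ℕ) (h : ℕ → M) (hh : ∀ u, Mn ≤ u → h u = 1) :
    (∏ᶠ u : ℕ, h u) = ∏ u ∈ Finset.range Mn, h u := by
  apply finprod_eq_prod_of_mulSupport_subset
  intro u hu
  simp only [Function.mem_mulSupport] at hu
  simp only [Finset.coe_range, Set.mem_Iio]
  by_contra h'
  exact hu (hh u (le_of_not_gt h'))

def AdmSet (f : ℕ → ℕ) (r s : ℕ) : Set (ℕ → ℕ) :=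
  {μ | Antitone μ ∧ ∀ k, μ k ≤ f (r + k) - s}

theorem AdmSet_finite (f : ℕ → ℕ) (r s N B : ℕ) (h0 : ∀ k, N ≤ k → f (r + k) - s = 0)
    (hB : ∀ k, f (r + k) - s ≤ B) : (AdmSet f r s).Finite := by
  have key : ∀ μ ∈ AdmSet f r s, ∀ k, N ≤ k → μ k = 0 := fun μ hμ k hk =>
    Nat.le_zero.1 ((hμ.2 k).trans (h0 k hk).le)
  apply Set.Finite.of_finite_image (f := fun μ (k : Fin N) => μ k)
  · apply Set.Finite.subset (Set.Finite.pi (fun _ : Fin N => Set.finite_Iic B))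
    rintro g ⟨μ, hμ, rfl⟩
    intro k _
    exact Set.mem_Iic.2 ((hμ.2 k).trans (hB k))
  · intro μ hμ ν hν heq
    funext k
    by_cases hk : k < N
    · exact congrFun heq ⟨k, hk⟩
    · rw [key μ hμ k (le_of_not_gt hk), key ν hν k (le_of_not_gt hk)]

noncomputable def Qprod (f : ℕ → ℕ) (r s Mn : ℕ) (μ : ℕ → ℕ) : MvPolynomial (ℕ × ℕ) ℤ :=
  ∏ u ∈ Finset.range Mn, ∏ v ∈ Finset.Ico (μ u) (f (r + u) - s), X (r + u, s + v)

theorem Ppoly_eq (f : ℕ → ℕ) (r s Mn : ℕ) (h0 : ∀ k, Mn ≤ k → f (r + k) - s = 0)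
    (hfin : (AdmSet f r s).Finite) :
    Ppoly f r s = ∑ μ ∈ hfin.toFinset, Qprod f r s Mn μ := by
  have hset : {μ : ℕ → ℕ | Antitone μ ∧ ∀ k, μ k ≤ f (r + k) - s} = AdmSet f r s := rfl
  rw [Ppoly, hset, finsum_mem_eq_finite_toFinset_sum _ hfin]
  apply Finset.sum_congr rfl
  intro μ _
  have inner : ∀ u : ℕ, (∏ᶠ (v : ℕ) (_ : v < f (r + u) - s) (_ : μ u ≤ v), X (r + u, s + v))
      = ∏ v ∈ Finset.Ico (μ u) (f (r + u) - s), (X (r + u, s + v) : MvPolynomial (ℕ × ℕ) ℤ) :=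
    fun u => finprod_Ico _ _ _
  rw [finprod_congr inner]
  rw [Qprod]
  apply finprod_range
  intro u hu
  rw [h0 u hu]
  simp

theorem prod_Ico_shift (m n t : ℕ) (g : ℕ → M) :
    ∏ v ∈ Finset.Ico (m + t) (n + t), g v = ∏ w ∈ Finset.Ico m n, g (w + t) := by
  rw [Finset.prod_Ico_eq_prod_range, Finset.prod_Ico_eq_prod_range]
  have h : n + t - (m + t) = n - m := by omega
  rw [h]
  apply Finset.prod_congr rfl
  intro k _
  congr 1
  omega

theorem Ppoly_congr (f g : ℕ → ℕ) (r s : ℕ) (h : ∀ u, f (r + u) - s = g (r + u) - s) :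
    Ppoly f r s = Ppoly g r s := by
  unfold Ppoly
  simp only [h]

/-- **Lemma (effect of adding a square on the polynomials `P`).**
Let `(a,b)` (0-indexed) be an addable corner of `λ`, i.e. `b = λ_{a+1}` and
(`a = 0` or `b < λ_a`), and let `λ' = λ ∪ {(a,b)}`. Then for squares `(i,j)` with
`i ≤ a` and `j ≤ b` one has `P'_{ij} = x_{ab}·P_{ij} + P_{i,b+1}·P_{a+1,j}`, while
`P'_{ij} = P_{ij}` whenever `i > a` or `j > b` (all indices 0-based). -/
theorem Ppoly_add_square (f : ℕ → ℕ) (hf : Antitone f) (hfz : ∃ N, f N = 0)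
    (a b : ℕ) (hb : b = f a) (hcorner : a = 0 ∨ b < f (a - 1))
    (f' : ℕ → ℕ) (hf' : f' = Function.update f a (f a + 1)) :
    (∀ i j : ℕ, i ≤ a → j ≤ b →
      Ppoly f' i j = X (a, b) * Ppoly f i j + Ppoly f i (b + 1) * Ppoly f (a + 1) j) ∧
    (∀ i j : ℕ, a < i ∨ b < j → Ppoly f' i j = Ppoly f i j) := by
  obtain ⟨N0, hN0⟩ := hfz
  have hfz' : ∀ k, N0 ≤ k → f k = 0 := fun k hk => Nat.le_zero.1 (hN0 ▸ hf hk)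
  have hf'k : ∀ k, f' k = if k = a then f a + 1 else f k := fun k => by
    rw [hf', Function.update_apply]
  have hfa : f a = b := hb.symm
  have hf'anti : Antitone f' := by
    intro x y hxy
    rw [hf'k, hf'k]
    split_ifs with h1 h2 h2
    · exact le_refl _
    · have hxa : x < a := lt_of_le_of_ne (h1 ▸ hxy) h2
      have ha0 : a ≠ 0 := by omega
      have hbf : b < f (a - 1) := hcorner.resolve_left ha0
      have hx1 : f (a - 1) ≤ f x := hf (by omega)
      omega
    · exact (h2 ▸ hf hxy).trans (Nat.le_succ _)
    · exact hf hxy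
  set Mn := N0 + a + 1 with hMn
  have hf'z : ∀ k, Mn ≤ k → f' k = 0 := fun k hk => by
    rw [hf'k, if_neg (by omega)]; exact hfz' k (by omega)
  have hfa1 : f (a + 1) ≤ b := hfa ▸ hf (Nat.le_succ a)
  constructor
  · intro i j hi hj
    set c := a - i with hc
    set d := b - j with hd
    have hic : i + c = a := by omega
    have hjd : j + d = b := by omega
    have h0' : ∀ k, Mn ≤ k → f' (i + k) - j = 0 := fun k hk => by
      rw [hf'z (i + k) (by omega)]; omega
    have h0 : ∀ k, Mn ≤ k → f (i + k) - j = 0 := fun k hk => by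
      rw [hfz' (i + k) (by omega)]; omega
    have h01 : ∀ k, Mn ≤ k → f (i + k) - (b + 1) = 0 := fun k hk => by
      rw [hfz' (i + k) (by omega)]; omega
    have h02 : ∀ k, Mn ≤ k → f (a + 1 + k) - j = 0 := fun k hk => by
      rw [hfz' (a + 1 + k) (by omega)]; omega
    have hB' : ∀ k, f' (i + k) - j ≤ f' 0 := fun k =>
      (Nat.sub_le _ _).trans (hf'anti (Nat.zero_le _))
    have hB : ∀ k, f (i + k) - j ≤ f 0 := fun k =>
      (Nat.sub_le _ _).trans (hf (Nat.zero_le _))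
    have hB1 : ∀ k, f (i + k) - (b + 1) ≤ f 0 := fun k =>
      (Nat.sub_le _ _).trans (hf (Nat.zero_le _))
    have hB2 : ∀ k, f (a + 1 + k) - j ≤ f 0 := fun k =>
      (Nat.sub_le _ _).trans (hf (Nat.zero_le _))
    have hfin' := AdmSet_finite f' i j Mn (f' 0) h0' hB'
    have hfinA := AdmSet_finite f i j Mn (f 0) h0 hB
    have hfin1 := AdmSet_finite f i (b + 1) Mn (f 0) h01 hB1
    have hfin2 := AdmSet_finite f (a + 1) j Mn (f 0) h02 hB2
    rw [Ppoly_eq f' i j Mn h0' hfin', Ppoly_eq f i j Mn h0 hfinA,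
        Ppoly_eq f i (b + 1) Mn h01 hfin1, Ppoly_eq f (a + 1) j Mn h02 hfin2]
    classical
    rw [← Finset.sum_filter_add_sum_filter_not hfin'.toFinset (fun μ => μ c ≤ d)]
    have hfprime_a : f' a = b + 1 := by rw [hf'k, if_pos rfl, hfa]
    congr 1
    · have hset : hfin'.toFinset.filter (fun μ => μ c ≤ d) = hfinA.toFinset := by
        ext μ
        simp only [Finset.mem_filter, Set.Finite.mem_toFinset]
        constructor
        · rintro ⟨⟨hmono, hle⟩, hcd⟩
          refine ⟨hmono, fun k => ?_⟩
          rcases eq_or_ne k c with rfl | hk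
          · have hfc : f (i + c) = b := by rw [hic, hfa]
            omega
          · have h2 := hle k
            rw [hf'k, if_neg (fun h => hk (by omega))] at h2
            exact h2
        · rintro ⟨hmono, hle⟩
          have hfc : f (i + c) = b := by rw [hic, hfa]
          have hcd : μ c ≤ d := by have := hle c; omega
          refine ⟨⟨hmono, fun k => ?_⟩, hcd⟩
          have h2 := hle k
          rw [hf'k]
          split_ifs with h
          · have hfc2 : f (i + k) = f a := by rw [h]
            omega
          · exact h2
      rw [hset, Finset.mul_sum]
      apply Finset.sum_congr rfl
      intro μ hμ
      rw [Set.Finite.mem_toFinset] at hμ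
      obtain ⟨hmono, hle⟩ := hμ
      have hfc : f (i + c) = b := by rw [hic, hfa]
      have hμc : μ c ≤ d := by have := hle c; omega
      show Qprod f' i j Mn μ = X (a, b) * Qprod f i j Mn μ
      unfold Qprod
      have hcM : c ∈ Finset.range Mn := Finset.mem_range.2 (by omega)
      rw [← Finset.prod_erase_mul _ _ hcM, ← Finset.prod_erase_mul _ _ hcM]
      have hrow : ∀ u ∈ (Finset.range Mn).erase c,
          (∏ v ∈ Finset.Ico (μ u) (f' (i + u) - j), (X (i + u, j + v) : MvPolynomial (ℕ × ℕ) ℤ))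
          = ∏ v ∈ Finset.Ico (μ u) (f (i + u) - j), X (i + u, j + v) := by
        intro u hu
        have hne : i + u ≠ a := fun h => (Finset.mem_erase.1 hu).1 (by omega)
        rw [hf'k, if_neg hne]
      rw [Finset.prod_congr rfl hrow]
      have h1 : f' (i + c) - j = d + 1 := by rw [hic, hfprime_a]; omega
      have h2 : f (i + c) - j = d := by omega
      rw [h1, h2, Finset.prod_Ico_succ_top hμc]
      have h3 : ((i + c : ℕ), (j + d : ℕ)) = ((a : ℕ), (b : ℕ)) := by rw [hic, hjd]
      rw [h3]
      ring
    · have hfc : f (i + c) = b := by rw [hic, hfa]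
      rw [Finset.sum_mul_sum, ← Finset.sum_product']
      apply Finset.sum_nbij'
        (i := fun μ => ((fun k => μ k - (d + 1) : ℕ → ℕ), (fun k => μ (c + 1 + k) : ℕ → ℕ)))
        (j := fun p (k : ℕ) => if k ≤ c then p.1 k + (d + 1) else p.2 (k - (c + 1)))
      · intro μ hμ
        simp only [Finset.mem_filter, Set.Finite.mem_toFinset] at hμ
        obtain ⟨⟨hmono, hle⟩, hncd⟩ := hμ
        have hμc : μ c = d + 1 := by
          have := hle c
          rw [show i + c = a from hic, hfprime_a] at this
          omega
        rw [Finset.mem_product]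
        constructor
        · rw [Set.Finite.mem_toFinset]
          show Antitone (fun k => μ k - (d + 1)) ∧ ∀ k, μ k - (d + 1) ≤ f (i + k) - (b + 1)
          refine ⟨fun x y hxy => Nat.sub_le_sub_right (hmono hxy) _, fun k => ?_⟩
          rcases eq_or_ne k c with rfl | hk
          · omega
          · have h2 := hle k
            rw [hf'k, if_neg (fun h => hk (by omega))] at h2
            omega
        · rw [Set.Finite.mem_toFinset]
          show Antitone (fun k => μ (c + 1 + k)) ∧ ∀ k, μ (c + 1 + k) ≤ f (a + 1 + k) - j
          refine ⟨fun x y hxy => hmono (by omega), fun k => ?_⟩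
          have h2 := hle (c + 1 + k)
          rw [hf'k, if_neg (by omega)] at h2
          have he : i + (c + 1 + k) = a + 1 + k := by omega
          rw [he] at h2
          exact h2
      · intro p hp
        rw [Finset.mem_product, Set.Finite.mem_toFinset, Set.Finite.mem_toFinset] at hp
        obtain ⟨⟨hν, hνle⟩, hρ, hρle⟩ := hp
        have hνc : p.1 c = 0 := by
          have := hνle c
          omega
        have hρ0 : p.2 0 ≤ d := by
          have h2 := hρle 0
          have h3 : f (a + 1 + 0) ≤ b := by simpa using hfa1
          omega
        simp only [Finset.mem_filter, Set.Finite.mem_toFinset]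
        refine ⟨⟨?_, ?_⟩, ?_⟩
        · intro x y hxy
          dsimp only
          by_cases hx : x ≤ c <;> by_cases hy : y ≤ c
          · simp only [if_pos hx, if_pos hy]
            exact Nat.add_le_add_right (hν hxy) _
          · simp only [if_pos hx, if_neg hy]
            have := hρ (Nat.zero_le (y - (c + 1)))
            omega
          · omega
          · simp only [if_neg hx, if_neg hy]
            exact hρ (by omega)
        · intro k
          dsimp only
          by_cases hk : k ≤ c
          · rw [if_pos hk]
            rcases eq_or_lt_of_le hk with rfl | hlt
            · rw [hf'k, if_pos (by omega : i + c = a)]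
              omega
            · have h2 := hνle k
              have hia : i + k < a := by omega
              have ha0 : a ≠ 0 := by omega
              have hbf : b < f (a - 1) := hcorner.resolve_left ha0
              have hge : f (a - 1) ≤ f (i + k) := hf (by omega)
              rw [hf'k, if_neg (by omega)]
              omega
          · rw [if_neg hk]
            have h2 := hρle (k - (c + 1))
            rw [hf'k, if_neg (by omega)]
            have he : a + 1 + (k - (c + 1)) = i + k := by omega
            rw [he] at h2
            exact h2
        · rw [if_pos (le_refl c)]
          omega
      · intro μ hμ
        simp only [Finset.mem_filter, Set.Finite.mem_toFinset] at hμ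
        obtain ⟨⟨hmono, hle⟩, hncd⟩ := hμ
        have hμc : μ c = d + 1 := by
          have := hle c
          rw [show i + c = a from hic, hfprime_a] at this
          omega
        funext k
        dsimp only
        by_cases hk : k ≤ c
        · simp only [if_pos hk]
          have := hmono hk
          omega
        · simp only [if_neg hk]
          congr 1
          omega
      · rintro ⟨ν, ρ⟩ hp
        rw [Finset.mem_product, Set.Finite.mem_toFinset, Set.Finite.mem_toFinset] at hp
        dsimp only at hp
        obtain ⟨⟨hν, hνle⟩, hρ, hρle⟩ := hp
        dsimp only
        simp only [Prod.mk.injEq]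
        constructor
        · funext k
          by_cases hk : k ≤ c
          · simp only [if_pos hk]
            omega
          · simp only [if_neg hk]
            have h2 := hνle k
            have h3 : f (i + k) ≤ b := hfa ▸ hf (by omega)
            have h5 := hρle (k - (c + 1))
            have h6 : f (a + 1 + (k - (c + 1))) ≤ b := hfa ▸ hf (by omega)
            omega
        · funext k
          have hnk : ¬ c + 1 + k ≤ c := by omega
          simp only [if_neg hnk]
          congr 1
          omega
      · intro μ hμ
        simp only [Finset.mem_filter, Set.Finite.mem_toFinset] at hμ
        obtain ⟨⟨hmono, hle⟩, hncd⟩ := hμ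
        have hμc : μ c = d + 1 := by
          have := hle c
          rw [show i + c = a from hic, hfprime_a] at this
          omega
        show (∏ u ∈ Finset.range Mn, ∏ v ∈ Finset.Ico (μ u) (f' (i + u) - j),
            (X (i + u, j + v) : MvPolynomial (ℕ × ℕ) ℤ))
          = (∏ u ∈ Finset.range Mn, ∏ v ∈ Finset.Ico (μ u - (d + 1)) (f (i + u) - (b + 1)),
              X (i + u, (b + 1) + v)) *
            (∏ u ∈ Finset.range Mn, ∏ v ∈ Finset.Ico (μ (c + 1 + u)) (f (a + 1 + u) - j),
              X (a + 1 + u, j + v))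
        have hBlock1 : (∏ u ∈ Finset.Ico 0 (c + 1), ∏ v ∈ Finset.Ico (μ u) (f' (i + u) - j),
            (X (i + u, j + v) : MvPolynomial (ℕ × ℕ) ℤ))
            = ∏ u ∈ Finset.range Mn, ∏ v ∈ Finset.Ico (μ u - (d + 1)) (f (i + u) - (b + 1)),
              X (i + u, (b + 1) + v) := by
          have hsub : Finset.range (c + 1) ⊆ Finset.range Mn := Finset.range_subset_range.2 (by omega)
          have hext : ∀ u ∈ Finset.range Mn, u ∉ Finset.range (c + 1) →
              (∏ v ∈ Finset.Ico (μ u - (d + 1)) (f (i + u) - (b + 1)),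
                (X (i + u, (b + 1) + v) : MvPolynomial (ℕ × ℕ) ℤ)) = 1 := by
            intro u _ hu
            have hcu : c < u := by
              rw [Finset.mem_range] at hu
              omega
            have hfb : f (i + u) ≤ b := hfa ▸ hf (by omega)
            rw [show f (i + u) - (b + 1) = 0 from by omega]
            simp
          rw [← Finset.prod_subset hsub hext]
          rw [show Finset.Ico 0 (c + 1) = Finset.range (c + 1) from by rw [Finset.range_eq_Ico]]
          apply Finset.prod_congr rfl
          intro u hu
          rw [Finset.mem_range] at hu
          rcases eq_or_lt_of_le (Nat.lt_succ_iff.1 hu) with rfl | hlt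
          · rw [show i + c = a from by omega, hfprime_a, hμc, hfa]
            rw [show b + 1 - j = d + 1 from by omega, show b - (b + 1) = 0 from by omega]
            simp
          · have hia : i + u < a := by omega
            have ha0 : a ≠ 0 := by omega
            have hbf : b < f (a - 1) := hcorner.resolve_left ha0
            have hge : f (a - 1) ≤ f (i + u) := hf (by omega)
            have hmu : μ u = (μ u - (d + 1)) + (d + 1) := by
              have := hmono (show u ≤ c from by omega)
              omega
            rw [hf'k, if_neg (by omega)]
            rw [show f (i + u) - j = (f (i + u) - (b + 1)) + (d + 1) from by omega]
            conv_lhs => rw [hmu]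
            rw [prod_Ico_shift]
            apply Finset.prod_congr rfl
            intro w _
            rw [show j + (w + (d + 1)) = (b + 1) + w from by omega]
        have hBlock2 : (∏ u ∈ Finset.Ico (c + 1) Mn, ∏ v ∈ Finset.Ico (μ u) (f' (i + u) - j),
            (X (i + u, j + v) : MvPolynomial (ℕ × ℕ) ℤ))
            = ∏ u ∈ Finset.range Mn, ∏ v ∈ Finset.Ico (μ (c + 1 + u)) (f (a + 1 + u) - j),
              X (a + 1 + u, j + v) := by
          rw [Finset.prod_Ico_eq_prod_range]
          have hsub : Finset.range (Mn - (c + 1)) ⊆ Finset.range Mn :=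
            Finset.range_subset_range.2 (by omega)
          have hext : ∀ u ∈ Finset.range Mn, u ∉ Finset.range (Mn - (c + 1)) →
              (∏ v ∈ Finset.Ico (μ (c + 1 + u)) (f (a + 1 + u) - j),
                (X (a + 1 + u, j + v) : MvPolynomial (ℕ × ℕ) ℤ)) = 1 := by
            intro u _ hu
            have hcu : Mn - (c + 1) ≤ u := by
              rw [Finset.mem_range] at hu
              omega
            have hz : f (a + 1 + u) = 0 := hfz' _ (by omega)
            rw [hz]
            simp
          rw [← Finset.prod_subset hsub hext]
          apply Finset.prod_congr rfl
          intro k _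
          have he : i + (c + 1 + k) = a + 1 + k := by omega
          rw [hf'k, if_neg (by omega), he]
        rw [← hBlock1, ← hBlock2, Finset.range_eq_Ico]
        exact (Finset.prod_Ico_consecutive _ (Nat.zero_le _) (by omega)).symm
  · intro i j hij
    apply Ppoly_congr
    intro u
    rcases hij with hia | hjb
    · rw [hf'k, if_neg (by omega)]
    · rw [hf'k]
      split_ifs with h
      · have hfe : f (i + u) = f a := by rw [h]
        omega
      · rfl
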